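/- The matched-pair covariance estimator Ĉov(τ̂_M) = (r(r−1))^{-1} Σ_{j=1}^r (τ̂_{j·} − τ̂_M)(τ̂_{j·} − τ̂_M)' has bias E[Ĉov(τ̂_M)] − Cov(τ̂_M) = (r(r−1))^{-1} Σ_{j=1}^r (τ_{j·} − τ)(τ_{j·} − τ)'. -/

import Mathlib

open Finset MeasureTheory

section Aux

variable {r : ℕ} {Ω : Fin r → Type} [∀ j, MeasurableSpace (Ω j)]

/-- Product of one-coordinate functions over a product probability measure:
integrability and the value of the integral. -/
theorem aux_pi (μ : ∀ j, Measure (Ω j)) [∀ j, IsProbabilityMeasure (μ j)]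
    (F : ∀ i, Ω i → ℝ) (hF : ∀ i, Integrable (F i) (μ i)) :
    Integrable (fun ω : ∀ i, Ω i => ∏ i, F i (ω i)) (Measure.pi μ) ∧
      ∫ ω, ∏ i, F i (ω i) ∂Measure.pi μ = ∏ i, ∫ x, F i x ∂μ i := by
  letI : ∀ j, MeasureSpace (Ω j) := fun j => ⟨μ j⟩
  haveI : ∀ j, SigmaFinite (volume : Measure (Ω j)) := fun j => inferInstanceAs (SigmaFinite (μ j))
  have hvol : Measure.pi μ = (volume : Measure (∀ i, Ω i)) := rfl
  rw [hvol]
  exact ⟨Integrable.fintype_prod_dep hF, integral_fintype_prod_eq_prod (μ := μ) F⟩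

theorem aux_single (μ : ∀ j, Measure (Ω j)) [∀ j, IsProbabilityMeasure (μ j)]
    (j : Fin r) (g : Ω j → ℝ) (hg : Integrable g (μ j)) :
    Integrable (fun ω : ∀ i, Ω i => g (ω j)) (Measure.pi μ) ∧
      ∫ ω, g (ω j) ∂Measure.pi μ = ∫ x, g x ∂μ j := by
  set F : ∀ i, Ω i → ℝ := Function.update (fun i (_ : Ω i) => (1 : ℝ)) j g with hFdef
  have hFj : F j = g := Function.update_self _ _ _
  have hFi : ∀ i, i ≠ j → F i = fun _ => (1 : ℝ) := fun i hi => Function.update_of_ne hi _ _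
  have hprod : ∀ ω : ∀ i, Ω i, ∏ i, F i (ω i) = g (ω j) := by
    intro ω
    rw [Finset.prod_eq_single j (fun i _ hi => by rw [hFi i hi]) (by simp), hFj]
  have hintF : ∀ i, Integrable (F i) (μ i) := by
    intro i
    by_cases h : i = j
    · subst h; rw [hFj]; exact hg
    · rw [hFi i h]; exact integrable_const 1
  obtain ⟨h1, h2⟩ := aux_pi μ F hintF
  have hfun : (fun ω : ∀ i, Ω i => ∏ i, F i (ω i)) = fun ω => g (ω j) := funext hprod
  refine ⟨hfun ▸ h1, ?_⟩
  rw [← hfun, h2, Finset.prod_eq_single j (fun i _ hi => by rw [hFi i hi]; simp) (by simp), hFj]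

theorem aux_pair (μ : ∀ j, Measure (Ω j)) [∀ j, IsProbabilityMeasure (μ j)]
    (j k : Fin r) (hjk : j ≠ k) (g : Ω j → ℝ) (h : Ω k → ℝ)
    (hg : Integrable g (μ j)) (hh : Integrable h (μ k)) :
    Integrable (fun ω : ∀ i, Ω i => g (ω j) * h (ω k)) (Measure.pi μ) ∧
      ∫ ω, g (ω j) * h (ω k) ∂Measure.pi μ = (∫ x, g x ∂μ j) * ∫ x, h x ∂μ k := by
  set F : ∀ i, Ω i → ℝ :=
    Function.update (Function.update (fun i (_ : Ω i) => (1 : ℝ)) j g) k h with hFdef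
  have hFk : F k = h := Function.update_self _ _ _
  have hFj : F j = g := by
    rw [hFdef, Function.update_of_ne hjk, Function.update_self]
  have hFi : ∀ i, i ≠ j → i ≠ k → F i = fun _ => (1 : ℝ) := fun i hij hik => by
    rw [hFdef, Function.update_of_ne hik, Function.update_of_ne hij]
  have hprod : ∀ ω : ∀ i, Ω i, ∏ i, F i (ω i) = g (ω j) * h (ω k) := by
    intro ω
    rw [← Finset.mul_prod_erase Finset.univ (fun i => F i (ω i)) (Finset.mem_univ j),
      ← Finset.mul_prod_erase _ (fun i => F i (ω i))
        (Finset.mem_erase.mpr ⟨fun hc => hjk hc.symm, Finset.mem_univ k⟩),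
      hFj, hFk]
    have : ∏ i ∈ (Finset.univ.erase j).erase k, F i (ω i) = 1 := by
      apply Finset.prod_eq_one
      intro i hi
      simp only [Finset.mem_erase, Finset.mem_univ, and_true] at hi
      rw [hFi i hi.2 hi.1]
    rw [this]; ring
  have hintF : ∀ i, Integrable (F i) (μ i) := by
    intro i
    by_cases h1 : i = j
    · subst h1; rw [hFj]; exact hg
    · by_cases h2 : i = k
      · subst h2; rw [hFk]; exact hh
      · rw [hFi i h1 h2]; exact integrable_const 1
  obtain ⟨h1, h2⟩ := aux_pi μ F hintF
  have hfun : (fun ω : ∀ i, Ω i => ∏ i, F i (ω i)) = fun ω => g (ω j) * h (ω k) := funext hprod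
  refine ⟨hfun ▸ h1, ?_⟩
  rw [← hfun, h2,
    ← Finset.mul_prod_erase Finset.univ (fun i => ∫ x, F i x ∂μ i) (Finset.mem_univ j),
    ← Finset.mul_prod_erase _ (fun i => ∫ x, F i x ∂μ i)
      (Finset.mem_erase.mpr ⟨fun hc => hjk hc.symm, Finset.mem_univ k⟩),
    hFj, hFk]
  have : ∏ i ∈ (Finset.univ.erase j).erase k, ∫ x, F i x ∂μ i = 1 := by
    apply Finset.prod_eq_one
    intro i hi
    simp only [Finset.mem_erase, Finset.mem_univ, and_true] at hi
    rw [hFi i hi.2 hi.1]; simp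
  rw [this]; ring

/-- Algebraic identity for centered sums. -/
theorem sum_centered {r : ℕ} (hr : r ≠ 0) (A B : Fin r → ℝ) :
    ∑ j, (A j - (r : ℝ)⁻¹ * ∑ k, A k) * (B j - (r : ℝ)⁻¹ * ∑ k, B k)
      = ∑ j, A j * B j - (r : ℝ)⁻¹ * ((∑ j, A j) * ∑ j, B j) := by
  have hrr : (r : ℝ) ≠ 0 := Nat.cast_ne_zero.mpr hr
  set S := ∑ k, A k with hS
  set T := ∑ k, B k with hT
  have key : ∀ j, (A j - (r : ℝ)⁻¹ * S) * (B j - (r : ℝ)⁻¹ * T)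
      = A j * B j - (r : ℝ)⁻¹ * T * A j - (r : ℝ)⁻¹ * S * B j
        + (r : ℝ)⁻¹ * ((r : ℝ)⁻¹ * (S * T)) := fun j => by ring
  rw [Finset.sum_congr rfl fun j _ => key j, Finset.sum_add_distrib, Finset.sum_sub_distrib,
    Finset.sum_sub_distrib, ← Finset.mul_sum, ← Finset.mul_sum, Finset.sum_const,
    Finset.card_univ, Fintype.card_fin, ← hS, ← hT]
  field_simp
  have h2 : (r : ℝ) ^ 2 * ((r : ℝ)⁻¹) ^ 2 = 1 := by rw [← mul_pow, mul_inv_cancel₀ hrr, one_pow]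
  linear_combination (T * S) * h2

end Aux

/-- Bias of the matched-pair covariance estimator.  The within-pair estimators
`τ̂ⱼ.` are independent random vectors in `ℝ^{2^K}` (modeled as `f j` depending
only on coordinate `j` of a product probability space, which encodes
independence) with means `E[τ̂ⱼ.] = τⱼ.`.  With `τ̂_M = (1/r) ∑ⱼ τ̂ⱼ.` and
`τ = (1/r) ∑ⱼ τⱼ.`, the estimator
`Ĉov(τ̂_M) = (r(r−1))⁻¹ ∑ⱼ (τ̂ⱼ. − τ̂_M)(τ̂ⱼ. − τ̂_M)'` satisfies, entrywise,
`E[Ĉov(τ̂_M)] − Cov(τ̂_M) = (r(r−1))⁻¹ ∑ⱼ (τⱼ. − τ)(τⱼ. − τ)'`. -/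
theorem covariance_estimator_bias (K r : ℕ) (hr : 2 ≤ r)
    (Ω : Fin r → Type) [∀ j, MeasurableSpace (Ω j)]
    (μ : ∀ j, Measure (Ω j)) [∀ j, IsProbabilityMeasure (μ j)]
    (f : ∀ j, Ω j → Fin (2 ^ K) → ℝ)
    (hmeas : ∀ j a, Measurable fun ω => f j ω a)
    (hint : ∀ j a b, Integrable (fun ω => f j ω a * f j ω b) (μ j))
    (τJ : Fin r → Fin (2 ^ K) → ℝ)
    (hmean : ∀ j a, ∫ ω, f j ω a ∂(μ j) = τJ j a) :
    ∀ a b : Fin (2 ^ K),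
      (∫ ω, ((r : ℝ) * ((r : ℝ) - 1))⁻¹ *
          ∑ j, (f j (ω j) a - (r : ℝ)⁻¹ * ∑ k, f k (ω k) a) *
               (f j (ω j) b - (r : ℝ)⁻¹ * ∑ k, f k (ω k) b) ∂(Measure.pi μ))
        - (∫ ω, (((r : ℝ)⁻¹ * ∑ j, f j (ω j) a) - (r : ℝ)⁻¹ * ∑ j, τJ j a) *
                (((r : ℝ)⁻¹ * ∑ j, f j (ω j) b) - (r : ℝ)⁻¹ * ∑ j, τJ j b)
            ∂(Measure.pi μ))
      = ((r : ℝ) * ((r : ℝ) - 1))⁻¹ *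
          ∑ j, (τJ j a - (r : ℝ)⁻¹ * ∑ k, τJ k a) * (τJ j b - (r : ℝ)⁻¹ * ∑ k, τJ k b) := by
  intro a b
  have hr0 : r ≠ 0 := by omega
  have hrr : (r : ℝ) ≠ 0 := Nat.cast_ne_zero.mpr hr0
  have hr1 : (r : ℝ) - 1 ≠ 0 := by
    have : (2 : ℝ) ≤ (r : ℝ) := by exact_mod_cast hr
    nlinarith
  -- integrability of single coordinates
  have hfi : ∀ j x, Integrable (fun ω => f j ω x) (μ j) := by
    intro j x
    have h2 : MemLp (fun ω => f j ω x) 2 (μ j) :=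
      (memLp_two_iff_integrable_sq (hmeas j x).aestronglyMeasurable).mpr
        (by simpa [sq] using hint j x x)
    exact h2.integrable one_le_two
  -- notation
  set c : ℝ := ((r : ℝ) * ((r : ℝ) - 1))⁻¹ with hc
  set I : ℝ := ∑ j, ∫ x, f j x a * f j x b ∂μ j with hI
  set Ta : ℝ := ∑ j, τJ j a with hTa
  set Tb : ℝ := ∑ j, τJ j b with hTb
  set D : ℝ := ∑ j, τJ j a * τJ j b with hD
  -- products of coordinates on the product space
  have hP : ∀ j k : Fin r,
      Integrable (fun ω : ∀ i, Ω i => f j (ω j) a * f k (ω k) b) (Measure.pi μ) := by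
    intro j k
    by_cases h : j = k
    · subst h
      exact (aux_single μ j (fun x => f j x a * f j x b) (hint j a b)).1
    · exact (aux_pair μ j k h (fun x => f j x a) (fun x => f k x b) (hfi j a) (hfi k b)).1
  have hPval : ∀ j k : Fin r,
      ∫ ω, f j (ω j) a * f k (ω k) b ∂Measure.pi μ
        = if j = k then ∫ x, f j x a * f j x b ∂μ j else τJ j a * τJ k b := by
    intro j k
    by_cases h : j = k
    · subst h
      rw [if_pos rfl]
      exact (aux_single μ j (fun x => f j x a * f j x b) (hint j a b)).2
    · rw [if_neg h, (aux_pair μ j k h (fun x => f j x a) (fun x => f k x b)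
        (hfi j a) (hfi k b)).2, hmean, hmean]
  have hA : ∀ (x : Fin (2 ^ K)) (j : Fin r),
      Integrable (fun ω : ∀ i, Ω i => f j (ω j) x) (Measure.pi μ) :=
    fun x j => (aux_single μ j (fun y => f j y x) (hfi j x)).1
  have hAval : ∀ (x : Fin (2 ^ K)) (j : Fin r),
      ∫ ω, f j (ω j) x ∂Measure.pi μ = τJ j x :=
    fun x j => by rw [(aux_single μ j (fun y => f j y x) (hfi j x)).2, hmean]
  have hSa : Integrable (fun ω : ∀ i, Ω i => ∑ j, f j (ω j) a) (Measure.pi μ) :=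
    integrable_finset_sum _ fun j _ => hA a j
  have hSb : Integrable (fun ω : ∀ i, Ω i => ∑ j, f j (ω j) b) (Measure.pi μ) :=
    integrable_finset_sum _ fun j _ => hA b j
  have hSaval : ∫ ω, ∑ j, f j (ω j) a ∂Measure.pi μ = Ta := by
    rw [integral_finset_sum _ fun j _ => hA a j, hTa]
    exact Finset.sum_congr rfl fun j _ => hAval a j
  have hSbval : ∫ ω, ∑ j, f j (ω j) b ∂Measure.pi μ = Tb := by
    rw [integral_finset_sum _ fun j _ => hA b j, hTb]
    exact Finset.sum_congr rfl fun j _ => hAval b j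
  -- the product of the two sums
  have hSSfun : (fun ω : ∀ i, Ω i => (∑ j, f j (ω j) a) * ∑ j, f j (ω j) b)
      = fun ω => ∑ j, ∑ k, f j (ω j) a * f k (ω k) b := by
    funext ω
    exact Finset.sum_mul_sum _ _ _ _
  have hSS : Integrable (fun ω : ∀ i, Ω i => (∑ j, f j (ω j) a) * ∑ j, f j (ω j) b)
      (Measure.pi μ) := by
    rw [hSSfun]
    exact integrable_finset_sum _ fun j _ => integrable_finset_sum _ fun k _ => hP j k
  have hSSval : ∫ ω, (∑ j, f j (ω j) a) * ∑ j, f j (ω j) b ∂Measure.pi μ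
      = I + Ta * Tb - D := by
    rw [hSSfun, integral_finset_sum _ fun j _ =>
      integrable_finset_sum _ fun k _ => hP j k]
    have step1 : ∀ j : Fin r, ∫ ω, ∑ k, f j (ω j) a * f k (ω k) b ∂Measure.pi μ
        = τJ j a * Tb + ((∫ x, f j x a * f j x b ∂μ j) - τJ j a * τJ j b) := by
      intro j
      rw [integral_finset_sum _ fun k _ => hP j k]
      have : ∀ k : Fin r, (∫ ω, f j (ω j) a * f k (ω k) b ∂Measure.pi μ)
          = τJ j a * τJ k b
            + (if j = k then (∫ x, f j x a * f j x b ∂μ j) - τJ j a * τJ j b else 0) := by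
        intro k
        rw [hPval j k]
        by_cases h : j = k
        · subst h; simp
        · simp [h]
      rw [Finset.sum_congr rfl fun k _ => this k, Finset.sum_add_distrib, ← Finset.mul_sum,
        Finset.sum_ite_eq, if_pos (Finset.mem_univ j), ← hTb]
    rw [Finset.sum_congr rfl fun j _ => step1 j, Finset.sum_add_distrib,
      Finset.sum_sub_distrib, ← Finset.sum_mul, ← hTa, ← hI, ← hD]
    ring
  -- first integral
  have hXint : Integrable (fun ω : ∀ i, Ω i => ∑ j, f j (ω j) a * f j (ω j) b)
      (Measure.pi μ) := integrable_finset_sum _ fun j _ => hP j j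
  have hXval : ∫ ω, ∑ j, f j (ω j) a * f j (ω j) b ∂Measure.pi μ = I := by
    rw [integral_finset_sum _ fun j _ => hP j j, hI]
    refine Finset.sum_congr rfl fun j _ => ?_
    rw [hPval j j, if_pos rfl]
  have hfirst : (∫ ω, c *
        ∑ j, (f j (ω j) a - (r : ℝ)⁻¹ * ∑ k, f k (ω k) a) *
             (f j (ω j) b - (r : ℝ)⁻¹ * ∑ k, f k (ω k) b) ∂Measure.pi μ)
      = c * (I - (r : ℝ)⁻¹ * (I + Ta * Tb - D)) := by
    have e1 : ∀ ω : ∀ i, Ω i,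
        (∑ j, (f j (ω j) a - (r : ℝ)⁻¹ * ∑ k, f k (ω k) a) *
              (f j (ω j) b - (r : ℝ)⁻¹ * ∑ k, f k (ω k) b))
        = (∑ j, f j (ω j) a * f j (ω j) b)
          - (r : ℝ)⁻¹ * ((∑ j, f j (ω j) a) * ∑ j, f j (ω j) b) := fun ω =>
      sum_centered hr0 (fun j => f j (ω j) a) (fun j => f j (ω j) b)
    simp_rw [e1]
    rw [integral_const_mul, integral_sub hXint (hSS.const_mul _), integral_const_mul,
      hXval, hSSval]
  -- second integral
  have hsecond : (∫ ω, (((r : ℝ)⁻¹ * ∑ j, f j (ω j) a) - (r : ℝ)⁻¹ * Ta) *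
        (((r : ℝ)⁻¹ * ∑ j, f j (ω j) b) - (r : ℝ)⁻¹ * Tb) ∂Measure.pi μ)
      = (r : ℝ)⁻¹ * (r : ℝ)⁻¹ * (I + Ta * Tb - D)
        - (r : ℝ)⁻¹ * ((r : ℝ)⁻¹ * Tb) * Ta - (r : ℝ)⁻¹ * ((r : ℝ)⁻¹ * Ta) * Tb
        + ((r : ℝ)⁻¹ * Ta) * ((r : ℝ)⁻¹ * Tb) := by
    have e2 : ∀ ω : ∀ i, Ω i,
        (((r : ℝ)⁻¹ * ∑ j, f j (ω j) a) - (r : ℝ)⁻¹ * Ta) *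
          (((r : ℝ)⁻¹ * ∑ j, f j (ω j) b) - (r : ℝ)⁻¹ * Tb)
        = (r : ℝ)⁻¹ * (r : ℝ)⁻¹ * ((∑ j, f j (ω j) a) * ∑ j, f j (ω j) b)
          - (r : ℝ)⁻¹ * ((r : ℝ)⁻¹ * Tb) * (∑ j, f j (ω j) a)
          - (r : ℝ)⁻¹ * ((r : ℝ)⁻¹ * Ta) * (∑ j, f j (ω j) b)
          + ((r : ℝ)⁻¹ * Ta) * ((r : ℝ)⁻¹ * Tb) := fun ω => by ring
    simp_rw [e2]
    have i1 : Integrable (fun ω : ∀ i, Ω i =>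
        (r : ℝ)⁻¹ * (r : ℝ)⁻¹ * ((∑ j, f j (ω j) a) * ∑ j, f j (ω j) b)
        - (r : ℝ)⁻¹ * ((r : ℝ)⁻¹ * Tb) * ∑ j, f j (ω j) a) (Measure.pi μ) :=
      (hSS.const_mul _).sub (hSa.const_mul _)
    have i2 : Integrable (fun ω : ∀ i, Ω i =>
        (r : ℝ)⁻¹ * (r : ℝ)⁻¹ * ((∑ j, f j (ω j) a) * ∑ j, f j (ω j) b)
        - (r : ℝ)⁻¹ * ((r : ℝ)⁻¹ * Tb) * ∑ j, f j (ω j) a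
        - (r : ℝ)⁻¹ * ((r : ℝ)⁻¹ * Ta) * ∑ j, f j (ω j) b) (Measure.pi μ) :=
      i1.sub (hSb.const_mul _)
    rw [integral_add i2 (integrable_const _),
      integral_sub i1 (hSb.const_mul _),
      integral_sub (hSS.const_mul _) (hSa.const_mul _),
      integral_const_mul, integral_const_mul, integral_const_mul, hSSval, hSaval, hSbval,
      integral_const]
    simp
  rw [hfirst, hsecond, sum_centered hr0, ← hTa, ← hTb, ← hD, hc]
  field_simp
  ring
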